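/- The function x̄(t) = cos t is an absolute minimizer of S(x) = ∫_0^{π/2} (x'(t)² - x(t)²) dt over all piecewise C¹ functions x : [0, π/2] → ℝ with x(0) = 1 and x(π/2) = 0; that is, S(x) ≥ S(x̄) for all such x. -/

import Mathlib

open Set MeasureTheory intervalIntegral Real

def PiecewiseC1 {E : Type*} [NormedAddCommGroup E] [NormedSpace ℝ E]
    (a b : ℝ) (x dx : ℝ → E) : Prop :=
  ContinuousOn x (Set.Icc a b) ∧
  (∃ M : ℝ, ∀ t ∈ Set.Icc a b, ‖dx t‖ ≤ M) ∧
  ∃ s : Finset ℝ,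
    (∀ t ∈ Set.Icc a b \ (s : Set ℝ), HasDerivWithinAt x (dx t) (Set.Icc a b) t) ∧
    ContinuousOn dx (Set.Icc a b \ (s : Set ℝ))

lemma aux_intervalIntegrable {f : ℝ → ℝ} {s : Finset ℝ} {A B a b M : ℝ}
    (hc : ContinuousOn f (Set.Icc A B \ (s : Set ℝ)))
    (hM : ∀ t ∈ Set.Icc A B, |f t| ≤ M)
    (hA : A ≤ a) (hab : a ≤ b) (hB : b ≤ B) :
    IntervalIntegrable f MeasureTheory.volume a b := by
  have hsnull : volume ((s : Set ℝ)) = 0 := (s.countable_toSet).measure_zero _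
  have hmeas0 : AEStronglyMeasurable f (volume.restrict (Icc A B \ (s : Set ℝ))) :=
    hc.aestronglyMeasurable (measurableSet_Icc.diff (s.measurableSet))
  have hre : volume.restrict (Icc A B \ (s : Set ℝ)) = volume.restrict (Icc A B) := by
    apply Measure.restrict_congr_set
    refine (MeasureTheory.diff_ae_eq_self).2 ?_
    exact measure_mono_null (Set.inter_subset_right) hsnull
  rw [hre] at hmeas0
  have hsub : Ioc a b ⊆ Icc A B := fun t ht =>
    ⟨le_trans hA (le_of_lt ht.1), le_trans ht.2 hB⟩
  have hmeas : AEStronglyMeasurable f (volume.restrict (Ioc a b)) :=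
    hmeas0.mono_measure (Measure.restrict_mono hsub le_rfl)
  rw [intervalIntegrable_iff_integrableOn_Ioc_of_le hab]
  refine Integrable.mono' (g := fun _ => M) ?_ hmeas ?_
  · exact integrableOn_const measure_Ioc_lt_top.ne
  · filter_upwards [ae_restrict_mem measurableSet_Ioc] with t ht
    exact hM t (hsub ht)

/-- `x̄(t) = cos t` is an absolute minimizer of `∫_0^{π/2} (ẋ² - x²) dt` over
piecewise C¹ curves with `x(0) = 1`, `x(π/2) = 0`. -/
theorem stmt10 (x dx : ℝ → ℝ) (hx : PiecewiseC1 0 (Real.pi / 2) x dx)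
    (hb0 : x 0 = 1) (hb1 : x (Real.pi / 2) = 0) :
    (∫ t in (0:ℝ)..(Real.pi / 2), ((dx t) ^ 2 - (x t) ^ 2)) ≥
      ∫ t in (0:ℝ)..(Real.pi / 2), ((-Real.sin t) ^ 2 - (Real.cos t) ^ 2) := by
  obtain ⟨hxc, ⟨M, hM⟩, s, hxd, hdxc⟩ := hx
  set P := Real.pi / 2 with hPdef
  have hP : 0 < P := by rw [hPdef]; positivity
  set u : ℝ → ℝ := fun t => x t - Real.cos t with hu
  set du : ℝ → ℝ := fun t => dx t + Real.sin t with hdu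
  obtain ⟨Cx, hCx⟩ := isCompact_Icc.exists_bound_of_continuousOn hxc
  set Cu := |Cx| + 1 with hCudef
  set Mu := |M| + 1 with hMudef
  have hCu : ∀ t ∈ Icc 0 P, |u t| ≤ Cu := by
    intro t ht
    have h1 : ‖x t‖ ≤ Cx := hCx t ht
    rw [Real.norm_eq_abs] at h1
    have h2 : |Real.cos t| ≤ 1 := Real.abs_cos_le_one t
    calc |u t| = |x t - Real.cos t| := rfl
      _ ≤ |x t| + |Real.cos t| := abs_sub _ _
      _ ≤ |Cx| + 1 := add_le_add (h1.trans (le_abs_self Cx)) h2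
  have hMu : ∀ t ∈ Icc 0 P, |du t| ≤ Mu := by
    intro t ht
    have h1 : ‖dx t‖ ≤ M := hM t ht
    rw [Real.norm_eq_abs] at h1
    calc |du t| = |dx t + Real.sin t| := rfl
      _ ≤ |dx t| + |Real.sin t| := abs_add_le _ _
      _ ≤ |M| + 1 := add_le_add (h1.trans (le_abs_self M)) (Real.abs_sin_le_one t)
  have hCu0 : 0 < Cu := by rw [hCudef]; positivity
  have hMu0 : 0 < Mu := by rw [hMudef]; positivity
  have hu_cont : ContinuousOn u (Icc 0 P) := hxc.sub Real.continuous_cos.continuousOn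
  have hdu_cont : ContinuousOn du (Icc 0 P \ (s : Set ℝ)) :=
    hdxc.add Real.continuous_sin.continuousOn
  have hu_at : ∀ t ∈ Ioo 0 P \ (s : Set ℝ), HasDerivAt u (du t) t := by
    rintro t ⟨ht, hts⟩
    have h1 : HasDerivWithinAt x (dx t) (Icc 0 P) t := hxd t ⟨Ioo_subset_Icc_self ht, hts⟩
    have h2 : HasDerivAt x (dx t) t := h1.hasDerivAt (Icc_mem_nhds ht.1 ht.2)
    have h3 := h2.sub (Real.hasDerivAt_cos t)
    have : dx t - -Real.sin t = du t := by rw [hdu]; ring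
    rw [this] at h3
    exact h3
  have hu0 : u 0 = 0 := by
    show x 0 - Real.cos 0 = 0
    rw [hb0, Real.cos_zero]; ring
  have huP : u P = 0 := by
    show x P - Real.cos P = 0
    rw [hb1, hPdef, Real.cos_pi_div_two]; ring
  -- integrability of basic integrands
  have hInt_du : ∀ a b : ℝ, 0 ≤ a → a ≤ b → b ≤ P → IntervalIntegrable du volume a b :=
    fun a b ha hab hb => aux_intervalIntegrable hdu_cont hMu ha hab hb
  have hA_cont : ContinuousOn (fun t => du t ^ 2 - u t ^ 2) (Icc 0 P \ (s : Set ℝ)) :=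
    (hdu_cont.pow 2).sub ((hu_cont.mono diff_subset).pow 2)
  have hA_bdd : ∀ t ∈ Icc 0 P, |du t ^ 2 - u t ^ 2| ≤ Mu ^ 2 + Cu ^ 2 := by
    intro t ht
    have h1 : |du t ^ 2| ≤ Mu ^ 2 := by
      rw [abs_pow]
      exact pow_le_pow_left₀ (abs_nonneg _) (hMu t ht) 2
    have h2 : |u t ^ 2| ≤ Cu ^ 2 := by
      rw [abs_pow]
      exact pow_le_pow_left₀ (abs_nonneg _) (hCu t ht) 2
    calc |du t ^ 2 - u t ^ 2| ≤ |du t ^ 2| + |u t ^ 2| := abs_sub _ _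
      _ ≤ Mu ^ 2 + Cu ^ 2 := add_le_add h1 h2
  have hInt_A : ∀ a b : ℝ, 0 ≤ a → a ≤ b → b ≤ P →
      IntervalIntegrable (fun t => du t ^ 2 - u t ^ 2) volume a b :=
    fun a b ha hab hb => aux_intervalIntegrable hA_cont hA_bdd ha hab hb
  -- step 1: the cross term integrates to zero
  have hG : (∫ t in (0:ℝ)..P, (Real.cos t * u t + Real.sin t * du t)) = 0 := by
    have hGint : IntervalIntegrable (fun t => Real.cos t * u t + Real.sin t * du t)
        volume 0 P := by
      refine aux_intervalIntegrable (s := s)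
        ((Real.continuous_cos.continuousOn.mono diff_subset).mul (hu_cont.mono diff_subset)
          |>.add (Real.continuous_sin.continuousOn.mono diff_subset |>.mul hdu_cont))
        (M := Cu + Mu) ?_ le_rfl hP.le le_rfl
      intro t ht
      calc |Real.cos t * u t + Real.sin t * du t|
          ≤ |Real.cos t * u t| + |Real.sin t * du t| := abs_add_le _ _
        _ ≤ 1 * Cu + 1 * Mu := by
            rw [abs_mul, abs_mul]
            exact add_le_add (mul_le_mul (Real.abs_cos_le_one t) (hCu t ht) (abs_nonneg _)
              zero_le_one) (mul_le_mul (Real.abs_sin_le_one t) (hMu t ht) (abs_nonneg _)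
              zero_le_one)
        _ = Cu + Mu := by ring
    have := MeasureTheory.integral_eq_of_hasDerivAt_off_countable_of_le
      (fun t => Real.sin t * u t) (fun t => Real.cos t * u t + Real.sin t * du t)
      hP.le s.countable_toSet
      (Real.continuous_sin.continuousOn.mul hu_cont)
      (fun t ht => (Real.hasDerivAt_sin t).mul (hu_at t ht)) hGint
    rw [this]
    simp [huP, hu0]
  -- step 2: the Wirtinger-type inequality
  have key : (0:ℝ) ≤ ∫ t in (0:ℝ)..P, (du t ^ 2 - u t ^ 2) := by
    set K : ℝ := Real.pi / 2 * Mu ^ 2 + (Mu ^ 2 + Cu ^ 2) with hKdef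
    have hK0 : 0 < K := by rw [hKdef]; positivity
    have main : ∀ b : ℝ, 0 ≤ b → b < P →
        -(K * (P - b)) ≤ ∫ t in (0:ℝ)..P, (du t ^ 2 - u t ^ 2) := by
      intro b hb0' hbP
      have hbP' : b ≤ P := hbP.le
      have hcos_pos : ∀ t ∈ Icc 0 b, 0 < Real.cos t := by
        intro t ht
        apply Real.cos_pos_of_mem_Ioo
        constructor
        · linarith [ht.1, hP]
        · exact lt_of_le_of_lt ht.2 hbP
      have hcosb : 0 < Real.cos b := hcos_pos b ⟨hb0', le_rfl⟩
      have hcosb_le : ∀ t ∈ Icc 0 b, Real.cos b ≤ Real.cos t := by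
        intro t ht
        apply Real.cos_le_cos_of_nonneg_of_le_pi ht.1 ?_ ht.2
        linarith [Real.pi_pos, hbP, hPdef]
      -- bound |u b| via FTC on [b, P]
      have hub : |u b| ≤ Mu * (P - b) := by
        have hftc := MeasureTheory.integral_eq_of_hasDerivAt_off_countable_of_le
          u du hbP' s.countable_toSet
          (hu_cont.mono (Icc_subset_Icc hb0' le_rfl))
          (fun t ht => hu_at t ⟨⟨lt_of_le_of_lt hb0' ht.1.1, ht.1.2⟩, ht.2⟩)
          (hInt_du b P hb0' hbP' le_rfl)
        have hnorm := intervalIntegral.norm_integral_le_of_norm_le_const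
          (C := Mu) (f := du) (a := b) (b := P) ?_
        · rw [hftc, huP] at hnorm
          rw [Real.norm_eq_abs] at hnorm
          have : |(0:ℝ) - u b| = |u b| := by rw [zero_sub, abs_neg]
          rw [this] at hnorm
          have : |P - b| = P - b := abs_of_nonneg (by linarith)
          rw [this] at hnorm
          exact hnorm
        · intro t ht
          rw [Set.uIoc_of_le hbP'] at ht
          rw [Real.norm_eq_abs]
          exact hMu t ⟨le_trans hb0' ht.1.le, ht.2⟩
      -- FTC for g = tan * u^2 on [0, b]
      set g' : ℝ → ℝ := fun t => 1 / Real.cos t ^ 2 * u t ^ 2 +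
        Real.tan t * (2 * u t ^ 1 * du t) with hg'def
      have htan_cont : ContinuousOn Real.tan (Icc 0 b) :=
        Real.continuousOn_tan.mono (fun t ht => (hcos_pos t ht).ne')
      have htan_bd : ∀ t ∈ Icc 0 b, |Real.tan t| ≤ 1 / Real.cos b := by
        intro t ht
        rw [Real.tan_eq_sin_div_cos, abs_div]
        rw [abs_of_pos (hcos_pos t ht)]
        apply div_le_div₀ (by positivity) (Real.abs_sin_le_one t) hcosb (hcosb_le t ht)
      have hsec_bd : ∀ t ∈ Icc 0 b, |1 / Real.cos t ^ 2| ≤ 1 / Real.cos b ^ 2 := by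
        intro t ht
        have hct := hcos_pos t ht
        rw [abs_of_pos (by positivity : (0:ℝ) < 1 / Real.cos t ^ 2)]
        apply one_div_le_one_div_of_le (by positivity)
        exact pow_le_pow_left₀ hcosb.le (hcosb_le t ht) 2
      have hg'int : IntervalIntegrable g' volume 0 b := by
        refine aux_intervalIntegrable (s := s) ?_
          (M := 1 / Real.cos b ^ 2 * Cu ^ 2 + 1 / Real.cos b * (2 * Cu * Mu)) ?_
          le_rfl hb0' le_rfl
        · refine ContinuousOn.add ?_ ?_
          · exact ((continuousOn_const.div ((Real.continuous_cos.pow 2).continuousOn)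
              (fun t ht => by
                exact pow_ne_zero _ (hcos_pos t ht.1).ne')).mul
              (((hu_cont.mono (Icc_subset_Icc le_rfl hbP')).mono diff_subset).pow 2))
          · exact (htan_cont.mono diff_subset).mul
              ((continuousOn_const.mul
                (((hu_cont.mono (Icc_subset_Icc le_rfl hbP')).mono diff_subset).pow 1)).mul
                  (hdu_cont.mono (diff_subset_diff (Icc_subset_Icc le_rfl hbP') le_rfl)))
        · intro t ht
          have htP : t ∈ Icc 0 P := Icc_subset_Icc le_rfl hbP' ht
          have h1 : |1 / Real.cos t ^ 2 * u t ^ 2| ≤ 1 / Real.cos b ^ 2 * Cu ^ 2 := by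
            rw [abs_mul]
            apply mul_le_mul (hsec_bd t ht) ?_ (abs_nonneg _) (by positivity)
            rw [abs_pow]
            exact pow_le_pow_left₀ (abs_nonneg _) (hCu t htP) 2
          have h2 : |Real.tan t * (2 * u t ^ 1 * du t)| ≤ 1 / Real.cos b * (2 * Cu * Mu) := by
            rw [abs_mul]
            apply mul_le_mul (htan_bd t ht) ?_ (abs_nonneg _) (by positivity)
            rw [abs_mul, abs_mul, pow_one]
            have h21 : |(2:ℝ)| * |u t| ≤ 2 * Cu :=
              mul_le_mul (by simp) (hCu t htP) (abs_nonneg _) (by norm_num)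
            exact mul_le_mul h21 (hMu t htP) (abs_nonneg _) (by positivity)
          have h3 : g' t = 1 / Real.cos t ^ 2 * u t ^ 2 + Real.tan t * (2 * u t ^ 1 * du t) := rfl
          rw [h3]
          exact le_trans (abs_add_le _ _) (add_le_add h1 h2)
      have hg_ftc : (∫ t in (0:ℝ)..b, g' t) = Real.tan b * u b ^ 2 := by
        have := MeasureTheory.integral_eq_of_hasDerivAt_off_countable_of_le
          (fun t => Real.tan t * u t ^ 2) g' hb0' s.countable_toSet
          (htan_cont.mul ((hu_cont.mono (Icc_subset_Icc le_rfl hbP')).pow 2))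
          (fun t ht => by
            have htIoo : t ∈ Ioo 0 P \ (s : Set ℝ) :=
              ⟨⟨ht.1.1, lt_trans ht.1.2 hbP⟩, ht.2⟩
            have hcost : Real.cos t ≠ 0 :=
              (hcos_pos t ⟨ht.1.1.le, ht.1.2.le⟩).ne'
            exact (Real.hasDerivAt_tan hcost).mul ((hu_at t htIoo).pow 2))
          hg'int
        rw [this]
        simp [hu0, Real.tan_zero]
      -- the pointwise completed-square identity on [0, b]
      have hpt : ∀ t ∈ Set.uIcc (0:ℝ) b, du t ^ 2 - u t ^ 2 =
          (du t + Real.tan t * u t) ^ 2 - g' t := by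
        intro t ht
        rw [Set.uIcc_of_le hb0'] at ht
        have hcost : Real.cos t ≠ 0 := (hcos_pos t ht).ne'
        have hs2 : Real.sin t ^ 2 = 1 - Real.cos t ^ 2 := by
          have := Real.sin_sq_add_cos_sq t; linarith
        have h4 : Real.tan t ^ 2 = 1 / Real.cos t ^ 2 - 1 := by
          rw [Real.tan_eq_sin_div_cos, div_pow, hs2]
          field_simp
        show du t ^ 2 - u t ^ 2 = (du t + Real.tan t * u t) ^ 2 -
          (1 / Real.cos t ^ 2 * u t ^ 2 + Real.tan t * (2 * u t ^ 1 * du t))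
        linear_combination (-(u t ^ 2)) * h4
      have hsq_int : IntervalIntegrable (fun t => (du t + Real.tan t * u t) ^ 2)
          volume 0 b := by
        refine aux_intervalIntegrable (s := s) ?_ (M := (Mu + 1 / Real.cos b * Cu) ^ 2)
          ?_ le_rfl hb0' le_rfl
        · exact ((hdu_cont.mono (diff_subset_diff (Icc_subset_Icc le_rfl hbP') le_rfl)).add
            ((htan_cont.mono diff_subset).mul
              ((hu_cont.mono (Icc_subset_Icc le_rfl hbP')).mono diff_subset))).pow 2
        · intro t ht
          have htP : t ∈ Icc 0 P := Icc_subset_Icc le_rfl hbP' ht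
          rw [abs_pow]
          apply pow_le_pow_left₀ (abs_nonneg _)
          calc |du t + Real.tan t * u t| ≤ |du t| + |Real.tan t * u t| := abs_add_le _ _
            _ ≤ Mu + 1 / Real.cos b * Cu := by
                refine add_le_add (hMu t htP) ?_
                rw [abs_mul]
                exact mul_le_mul (htan_bd t ht) (hCu t htP) (abs_nonneg _) (by positivity)
      -- the inequality on [0, b]
      have hIb : -(Real.tan b * u b ^ 2) ≤ ∫ t in (0:ℝ)..b, (du t ^ 2 - u t ^ 2) := by
        have heq : (∫ t in (0:ℝ)..b, (du t ^ 2 - u t ^ 2)) =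
            (∫ t in (0:ℝ)..b, (du t + Real.tan t * u t) ^ 2) - ∫ t in (0:ℝ)..b, g' t := by
          rw [← intervalIntegral.integral_sub hsq_int hg'int]
          exact intervalIntegral.integral_congr hpt
        rw [heq, hg_ftc]
        have : (0:ℝ) ≤ ∫ t in (0:ℝ)..b, (du t + Real.tan t * u t) ^ 2 :=
          intervalIntegral.integral_nonneg hb0' (fun t _ => sq_nonneg _)
        linarith
      -- bound tan b * u b ^ 2
      have htail : Real.tan b * u b ^ 2 ≤ Real.pi / 2 * Mu ^ 2 * (P - b) := by
        have hPb : 0 < P - b := by linarith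
        have hcos_lb : 2 / Real.pi * (P - b) ≤ Real.cos b := by
          have h1 : Real.cos b = Real.sin (Real.pi / 2 - b) := (Real.sin_pi_div_two_sub b).symm
          rw [h1, ← hPdef]
          exact Real.mul_le_sin (by linarith) (by rw [← hPdef]; linarith)
        have hub2 : u b ^ 2 ≤ (Mu * (P - b)) ^ 2 := by
          rw [← sq_abs (u b)]
          exact pow_le_pow_left₀ (abs_nonneg _) hub 2
        have htanb : Real.tan b ≤ 1 / Real.cos b := by
          rw [Real.tan_eq_sin_div_cos]
          apply div_le_div₀ zero_le_one (Real.sin_le_one b) hcosb le_rfl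
        calc Real.tan b * u b ^ 2 ≤ 1 / Real.cos b * (Mu * (P - b)) ^ 2 := by
              apply mul_le_mul htanb hub2 (sq_nonneg _) (one_div_nonneg.2 hcosb.le)
          _ ≤ 1 / (2 / Real.pi * (P - b)) * (Mu * (P - b)) ^ 2 := by
              apply mul_le_mul_of_nonneg_right ?_ (sq_nonneg _)
              apply one_div_le_one_div_of_le (by positivity) hcos_lb
          _ = Real.pi / 2 * Mu ^ 2 * (P - b) := by
              field_simp
      -- bound tail integral
      have htail2 : -((Mu ^ 2 + Cu ^ 2) * (P - b)) ≤ ∫ t in b..P, (du t ^ 2 - u t ^ 2) := by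
        have hnorm := intervalIntegral.norm_integral_le_of_norm_le_const
          (C := Mu ^ 2 + Cu ^ 2) (f := fun t => du t ^ 2 - u t ^ 2) (a := b) (b := P) ?_
        · rw [Real.norm_eq_abs] at hnorm
          have habs : |P - b| = P - b := abs_of_nonneg (by linarith)
          rw [habs] at hnorm
          have := neg_abs_le (∫ t in b..P, (du t ^ 2 - u t ^ 2))
          linarith
        · intro t ht
          rw [Set.uIoc_of_le hbP'] at ht
          rw [Real.norm_eq_abs]
          exact hA_bdd t ⟨le_trans hb0' ht.1.le, ht.2⟩
      have hsplit2 : (∫ t in (0:ℝ)..P, (du t ^ 2 - u t ^ 2)) =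
          (∫ t in (0:ℝ)..b, (du t ^ 2 - u t ^ 2)) + ∫ t in b..P, (du t ^ 2 - u t ^ 2) :=
        (intervalIntegral.integral_add_adjacent_intervals
          (hInt_A 0 b le_rfl hb0' hbP') (hInt_A b P hb0' hbP' le_rfl)).symm
      have hcomb := add_le_add (le_trans (neg_le_neg htail) hIb) htail2
      rw [hsplit2]
      calc -(K * (P - b))
          = -(Real.pi / 2 * Mu ^ 2 * (P - b)) + -((Mu ^ 2 + Cu ^ 2) * (P - b)) := by
            rw [hKdef]; ring
        _ ≤ _ := hcomb
    -- pass to the limit b → P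
    by_contra hneg
    push_neg at hneg
    set I := ∫ t in (0:ℝ)..P, (du t ^ 2 - u t ^ 2) with hIdef
    set b : ℝ := max 0 (P + I / (2 * K)) with hbdef
    have hb0' : 0 ≤ b := le_max_left _ _
    have hI : I < 0 := hneg
    have hbP : b < P := by
      rw [hbdef]
      apply max_lt hP
      have : I / (2 * K) < 0 := div_neg_of_neg_of_pos hI (by positivity)
      linarith
    have h1 := main b hb0' hbP
    have h2 : P - b ≤ -I / (2 * K) := by
      have : P + I / (2 * K) ≤ b := le_max_right _ _
      have h3 : -I / (2 * K) = -(I / (2 * K)) := by ring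
      rw [h3]
      linarith
    have h4 : K * (P - b) ≤ K * (-I / (2 * K)) :=
      mul_le_mul_of_nonneg_left h2 hK0.le
    have h5 : K * (-I / (2 * K)) = -I / 2 := by field_simp
    rw [h5] at h4
    clear_value I K b
    linarith
  -- step 3: combine
  have hC_int : IntervalIntegrable (fun t => (-Real.sin t) ^ 2 - Real.cos t ^ 2) volume 0 P :=
    (((Real.continuous_sin.neg.pow 2).sub (Real.continuous_cos.pow 2)).intervalIntegrable 0 P)
  have hG_int : IntervalIntegrable (fun t => Real.cos t * u t + Real.sin t * du t)
      volume 0 P := by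
    refine aux_intervalIntegrable (s := s)
      ((Real.continuous_cos.continuousOn.mono diff_subset).mul (hu_cont.mono diff_subset)
        |>.add (Real.continuous_sin.continuousOn.mono diff_subset |>.mul hdu_cont))
      (M := Cu + Mu) ?_ le_rfl hP.le le_rfl
    intro t ht
    calc |Real.cos t * u t + Real.sin t * du t|
        ≤ |Real.cos t * u t| + |Real.sin t * du t| := abs_add_le _ _
      _ ≤ 1 * Cu + 1 * Mu := by
          rw [abs_mul, abs_mul]
          exact add_le_add (mul_le_mul (Real.abs_cos_le_one t) (hCu t ht) (abs_nonneg _)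
            zero_le_one) (mul_le_mul (Real.abs_sin_le_one t) (hMu t ht) (abs_nonneg _)
            zero_le_one)
      _ = Cu + Mu := by ring
  have hsplit : (∫ t in (0:ℝ)..P, (dx t ^ 2 - x t ^ 2)) =
      (∫ t in (0:ℝ)..P, (du t ^ 2 - u t ^ 2))
      - 2 * (∫ t in (0:ℝ)..P, (Real.cos t * u t + Real.sin t * du t))
      + ∫ t in (0:ℝ)..P, ((-Real.sin t) ^ 2 - Real.cos t ^ 2) := by
    have hpw : ∀ t ∈ Set.uIcc (0:ℝ) P, dx t ^ 2 - x t ^ 2 =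
        (du t ^ 2 - u t ^ 2) - 2 * (Real.cos t * u t + Real.sin t * du t)
        + ((-Real.sin t) ^ 2 - Real.cos t ^ 2) := by
      intro t _
      have h1 : x t = u t + Real.cos t := by rw [hu]; ring
      have h2 : dx t = du t - Real.sin t := by rw [hdu]; ring
      rw [h1, h2]; ring
    calc (∫ t in (0:ℝ)..P, (dx t ^ 2 - x t ^ 2))
        = ∫ t in (0:ℝ)..P, ((du t ^ 2 - u t ^ 2)
            - 2 * (Real.cos t * u t + Real.sin t * du t)
            + ((-Real.sin t) ^ 2 - Real.cos t ^ 2)) := intervalIntegral.integral_congr hpw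
      _ = _ := by
          rw [intervalIntegral.integral_add
                ((hInt_A 0 P le_rfl hP.le le_rfl).sub (hG_int.const_mul 2)) hC_int,
              intervalIntegral.integral_sub (hInt_A 0 P le_rfl hP.le le_rfl)
                (hG_int.const_mul 2),
              intervalIntegral.integral_const_mul]
  rw [hsplit, hG]
  have hge : (0:ℝ) ≤ ∫ t in (0:ℝ)..P, (du t ^ 2 - u t ^ 2) := key
  rw [ge_iff_le]
  linarith
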